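/- Let a, b be natural numbers with 0 < b < a, and let u, v be natural numbers with u > 0 such that |a·u − b·v| < |a·u' − b·v'| for all natural numbers u', v' with 0 < u' ≤ u and v'/u' ≠ v/u (as rationals). Then there exists an index i with 0 ≤ i ≤ n such that v/u = v_i/u_i (as rationals). (No exception concerning a/b = a_0 + 1/2 is needed for this direction.) -/

import Mathlib

/-- Remainder chain of the Euclidean algorithm, shifted by 2:
`euclidR a b k = r_{k-2}`, so `euclidR a b 0 = r_{-2} = a`, `euclidR a b 1 = r_{-1} = b`,
and `r_i = r_{i-2} mod r_{i-1}`. -/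
def euclidR (a b : ℕ) : ℕ → ℕ
  | 0 => a
  | 1 => b
  | k + 2 => euclidR a b k % euclidR a b (k + 1)

/-- The partial quotients of the continued fraction of `a/b`:
`euclidQ a b i = a_i = r_{i-2} div r_{i-1}`. -/
def euclidQ (a b : ℕ) (i : ℕ) : ℕ := euclidR a b i / euclidR a b (i + 1)

/-- Denominators of the convergents, shifted by 2: `convU a b k = u_{k-2}`,
with `u_{-2} = 1`, `u_{-1} = 0` and `u_i = u_{i-1}·a_i + u_{i-2}`. -/
def convU (a b : ℕ) : ℕ → ℕ
  | 0 => 1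
  | 1 => 0
  | k + 2 => convU a b (k + 1) * euclidQ a b k + convU a b k

/-- Numerators of the convergents, shifted by 2: `convV a b k = v_{k-2}`,
with `v_{-2} = 0`, `v_{-1} = 1` and `v_i = v_{i-1}·a_i + v_{i-2}`. -/
def convV (a b : ℕ) : ℕ → ℕ
  | 0 => 0
  | 1 => 1
  | k + 2 => convV a b (k + 1) * euclidQ a b k + convV a b k

lemma euclidR_rec (a b k : ℕ) :
    euclidR a b (k + 2) + euclidR a b (k + 1) * euclidQ a b k = euclidR a b k := by
  show euclidR a b k % euclidR a b (k+1) + _ * _ = _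
  exact Nat.mod_add_div _ _

lemma convU_rec (a b k : ℕ) :
    convU a b (k + 2) = convU a b (k + 1) * euclidQ a b k + convU a b k := rfl

lemma convV_rec (a b k : ℕ) :
    convV a b (k + 2) = convV a b (k + 1) * euclidQ a b k + convV a b k := rfl

lemma conv_identity (a b : ℕ) : ∀ k : ℕ,
    (a:ℤ) * convU a b k - (b:ℤ) * convV a b k = (-1)^k * (euclidR a b k : ℤ)
  | 0 => by simp [convU, convV, euclidR]
  | 1 => by simp [convU, convV, euclidR]
  | (k+2) => by
    have h1 := conv_identity a b k
    have h2 := conv_identity a b (k+1)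
    have hr : (euclidR a b (k+2) : ℤ) + (euclidR a b (k+1):ℤ) * (euclidQ a b k:ℤ)
        = (euclidR a b k : ℤ) := by exact_mod_cast congrArg (Nat.cast (R := ℤ)) (euclidR_rec a b k)
    rw [convU_rec, convV_rec]
    push_cast
    linear_combination (euclidQ a b k : ℤ) * h2 + h1 - (-1:ℤ)^k * hr

lemma conv_det (a b : ℕ) : ∀ k : ℕ,
    (convV a b (k+1) : ℤ) * convU a b k - (convV a b k : ℤ) * convU a b (k+1) = (-1)^k
  | 0 => by simp [convU, convV]
  | (k+1) => by
    have ih := conv_det a b k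
    rw [show k+1+1 = k+2 from rfl, convU_rec, convV_rec]
    push_cast
    linear_combination (-1 : ℤ) * ih

lemma R_pos (a b n : ℕ) (hb : 0 < b) (hba : b < a)
    (hmin : ∀ k < n, euclidR a b (k+2) ≠ 0) :
    ∀ k ≤ n + 1, 0 < euclidR a b k
  | 0 => fun _ => by show 0 < a; omega
  | 1 => fun _ => hb
  | (k+2) => fun hk => Nat.pos_of_ne_zero (hmin k (by omega))

lemma Q_ge_one (a b n : ℕ) (hb : 0 < b) (hba : b < a)
    (hmin : ∀ k < n, euclidR a b (k+2) ≠ 0) :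
    ∀ k ≤ n, 1 ≤ euclidQ a b k := by
  intro k hk
  have h2 : 0 < euclidR a b (k+1) := R_pos a b n hb hba hmin (k+1) (by omega)
  have h1 : euclidR a b (k+1) ≤ euclidR a b k := by
    match k with
    | 0 => exact le_of_lt hba
    | (j+1) =>
      have hj : 0 < euclidR a b (j+1) := R_pos a b n hb hba hmin (j+1) (by omega)
      have : euclidR a b (j+2) < euclidR a b (j+1) := by
        show euclidR a b j % euclidR a b (j+1) < _
        exact Nat.mod_lt _ hj
      exact le_of_lt this
  exact (Nat.one_le_div_iff h2).mpr h1

lemma U_pos (a b n : ℕ) (hb : 0 < b) (hba : b < a)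
    (hmin : ∀ k < n, euclidR a b (k+2) ≠ 0) :
    ∀ k ≤ n, 1 ≤ convU a b (k+2) := by
  intro k
  induction k with
  | zero => intro _; rw [convU_rec]; simp [convU]
  | succ k ih =>
    intro hk
    have h1 := ih (by omega)
    have h2 := Q_ge_one a b n hb hba hmin (k+1) hk
    rw [show k+1+2 = (k+1)+2 from rfl, convU_rec]
    have e : convU a b (k+1+1) = convU a b (k+2) := rfl
    rw [e]
    have := Nat.mul_le_mul h1 h2
    omega

attribute [irreducible] euclidR euclidQ convU convV

lemma main_lemma (a b : ℕ) (hb : 0 < b) (hba : b < a)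
    (n : ℕ) (hzero : euclidR a b (n + 2) = 0)
    (hmin : ∀ k < n, euclidR a b (k+2) ≠ 0)
    (u v : ℕ) (hu : 0 < u)
    (hbest : ∀ u' v' : ℕ, 0 < u' → u' ≤ u →
      (v' : ℚ) / (u' : ℚ) ≠ (v : ℚ) / (u : ℚ) →
      |(a : ℤ) * u - (b : ℤ) * v| < |(a : ℤ) * u' - (b : ℤ) * v'|) :
    ∃ i ≤ n, (v : ℚ) / (u : ℚ) = (convV a b (i + 2) : ℚ) / (convU a b (i + 2) : ℚ) := by
  by_contra hcon
  push_neg at hcon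
  by_cases hcase : u < convU a b (n+2)
  case neg =>
    have hUn : 0 < convU a b (n+2) := U_pos a b n hb hba hmin n le_rfl
    have hDn : (a:ℤ) * convU a b (n+2) - (b:ℤ) * convV a b (n+2) = 0 := by
      have := conv_identity a b (n+2)
      rw [hzero] at this; simpa using this
    have h := hbest (convU a b (n+2)) (convV a b (n+2)) hUn (le_of_not_gt hcase)
      (fun h => hcon n le_rfl h.symm)
    rw [hDn] at h
    simp at h
    exact absurd h (abs_nonneg _).not_gt
  case pos =>
    have hP0 : (fun j => convU a b (j+2) ≤ u) 0 := by
      show convU a b (0+2) ≤ u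
      rw [convU_rec]; simpa [convU] using (show 1 ≤ u from hu)
    have hPi : convU a b (Nat.findGreatest (fun j => convU a b (j+2) ≤ u) n + 2) ≤ u :=
      Nat.findGreatest_spec (P := fun j => convU a b (j+2) ≤ u) (Nat.zero_le n) hP0
    have hin : Nat.findGreatest (fun j => convU a b (j+2) ≤ u) n ≤ n :=
      Nat.findGreatest_le n
    have hPi1 : ∀ k, Nat.findGreatest (fun j => convU a b (j+2) ≤ u) n < k → k ≤ n →
        ¬ (convU a b (k+2) ≤ u) :=
      fun k h1 h2 => Nat.findGreatest_is_greatest (P := fun j => convU a b (j+2) ≤ u) h1 h2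
    generalize hI : Nat.findGreatest (fun j => convU a b (j+2) ≤ u) n = i at hPi hin hPi1
    have hiln : i < n := by
      rcases hin.lt_or_eq with h | h
      · exact h
      · exact absurd (h ▸ hPi) (not_le.mpr hcase)
    have huqN : u < convU a b (i+3) := by
      have h := hPi1 (i+1) (by omega) (by omega)
      have e : convU a b (i+1+2) = convU a b (i+3) := rfl
      rw [e] at h
      omega
    -- integer facts
    have hp1 : (1:ℤ) ≤ (convU a b (i+2) : ℤ) := by
      exact_mod_cast U_pos a b n hb hba hmin i (le_of_lt hiln)
    have hpu : (convU a b (i+2) : ℤ) ≤ (u:ℤ) := by exact_mod_cast hPi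
    have huq : (u:ℤ) < (convU a b (i+3) : ℤ) := by exact_mod_cast huqN
    have hr2pos : (0:ℤ) < (euclidR a b (i+2) : ℤ) := by
      exact_mod_cast R_pos a b n hb hba hmin (i+2) (by omega)
    have hr3 : (0:ℤ) ≤ (euclidR a b (i+3) : ℤ) := Int.natCast_nonneg _
    have hu' : (0:ℤ) < (u:ℤ) := by exact_mod_cast hu
    have hε2 : ((-1:ℤ))^i * (-1)^i = 1 := by
      rw [← pow_add]; exact Even.neg_one_pow ⟨i, rfl⟩
    have hεabs : |((-1:ℤ))^i| = 1 := by rw [abs_pow, abs_neg, abs_one, one_pow]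
    have hD2 : (a:ℤ) * convU a b (i+2) - (b:ℤ) * convV a b (i+2)
        = (-1)^i * euclidR a b (i+2) := by
      have h := conv_identity a b (i+2)
      rw [show ((-1:ℤ))^(i+2) = (-1)^i from by ring] at h
      exact h
    have hD3 : (a:ℤ) * convU a b (i+3) - (b:ℤ) * convV a b (i+3)
        = -((-1)^i * euclidR a b (i+3)) := by
      have h := conv_identity a b (i+3)
      rw [show ((-1:ℤ))^(i+3) = -(-1)^i from by ring] at h
      linarith [h]
    have hdet : (convV a b (i+3) : ℤ) * convU a b (i+2)
        - (convV a b (i+2) : ℤ) * convU a b (i+3) = (-1)^i := by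
      have h := conv_det a b (i+2)
      rw [show ((-1:ℤ))^(i+2) = (-1)^i from by ring] at h
      exact h
    obtain ⟨x, hxdef⟩ : ∃ x:ℤ, x = -(-1)^i * ((convU a b (i+3):ℤ) * v - (convV a b (i+3):ℤ) * u) :=
      ⟨_, rfl⟩
    obtain ⟨y, hydef⟩ : ∃ y:ℤ, y = -(-1)^i * ((convV a b (i+2):ℤ) * u - (convU a b (i+2):ℤ) * v) :=
      ⟨_, rfl⟩
    have hxv : x * convV a b (i+2) + y * convV a b (i+3) = (v:ℤ) := by
      rw [hxdef, hydef]
      linear_combination ((-1:ℤ)^i * (v:ℤ)) * hdet + (v:ℤ) * hε2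
    have hxu : x * convU a b (i+2) + y * convU a b (i+3) = (u:ℤ) := by
      rw [hxdef, hydef]
      linear_combination ((-1:ℤ)^i * (u:ℤ)) * hdet + (u:ℤ) * hε2
    rcases eq_or_ne y 0 with hy0 | hy0
    · -- then v/u equals the i-th convergent: contradiction with hcon
      apply hcon i (le_of_lt hiln)
      have hxp : x * convU a b (i+2) = (u:ℤ) := by rw [hy0] at hxu; simpa using hxu
      have hxs : x * convV a b (i+2) = (v:ℤ) := by rw [hy0] at hxv; simpa using hxv
      have hZ : (v:ℤ) * convU a b (i+2) = (convV a b (i+2):ℤ) * u := by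
        rw [← hxp, ← hxs]; ring
      have hu0 : ((u:ℚ)) ≠ 0 := by exact_mod_cast hu.ne'
      have hU0 : ((convU a b (i+2):ℚ)) ≠ 0 := by
        have : (0:ℤ) < (convU a b (i+2):ℤ) := by linarith
        exact_mod_cast this.ne'
      rw [div_eq_div_iff hu0 hU0]
      exact_mod_cast hZ
    clear hxdef hydef hdet hε2 hPi hPi1 hP0 hzero hmin huqN hcase hin
    rcases eq_or_ne x 0 with hx0 | hx0
    · rw [hx0] at hxu
      simp at hxu
      have hq0 : (0:ℤ) < (convU a b (i+3):ℤ) := by linarith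
      have hy1 : 1 ≤ y := by
        rcases lt_trichotomy y 0 with h | h | h
        · have := mul_le_mul_of_nonneg_right (show y ≤ -1 by linarith) (le_of_lt hq0)
          linarith
        · rw [h] at hxu; simp at hxu; omega
        · linarith
      have := mul_le_mul_of_nonneg_right hy1 (le_of_lt hq0)
      linarith
    · have hxy : x * y < 0 := by
        rcases hx0.lt_or_gt with hx | hx <;> rcases hy0.lt_or_gt with hy | hy
        · have h1 := mul_le_mul_of_nonneg_right (show x ≤ -1 by linarith)
            (show (0:ℤ) ≤ convU a b (i+2) by linarith)
          have h2 := mul_le_mul_of_nonneg_right (show y ≤ -1 by linarith)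
            (show (0:ℤ) ≤ convU a b (i+3) by linarith)
          linarith
        · exact mul_neg_of_neg_of_pos hx hy
        · exact mul_neg_of_pos_of_neg hx hy
        · have h1 := mul_le_mul_of_nonneg_right (show (1:ℤ) ≤ x by linarith)
            (show (0:ℤ) ≤ convU a b (i+2) by linarith)
          have h2 := mul_le_mul_of_nonneg_right (show (1:ℤ) ≤ y by linarith)
            (show (0:ℤ) ≤ convU a b (i+3) by linarith)
          linarith
      have heq : (a:ℤ) * u - (b:ℤ) * v
          = (-1)^i * (x * euclidR a b (i+2) - y * euclidR a b (i+3)) := by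
        rw [← hxu, ← hxv]; linear_combination x * hD2 + y * hD3
      have habs : (euclidR a b (i+2) : ℤ) ≤ |(a:ℤ) * u - (b:ℤ) * v| := by
        rw [heq, abs_mul, hεabs, one_mul]
        rcases hx0.lt_or_gt with hx | hx
        · have hy : 0 < y := by
            rcases hy0.lt_or_gt with h | h
            · linarith [mul_pos_of_neg_of_neg hx h]
            · exact h
          have h1 : x * (euclidR a b (i+2):ℤ) ≤ -(euclidR a b (i+2):ℤ) := by
            have := mul_le_mul_of_nonneg_right (show x ≤ -1 by linarith) hr2pos.le
            linarith
          have h2 : 0 ≤ y * (euclidR a b (i+3):ℤ) := mul_nonneg hy.le hr3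
          calc (euclidR a b (i+2):ℤ)
              ≤ -(x * euclidR a b (i+2) - y * euclidR a b (i+3)) := by linarith
            _ ≤ |x * (euclidR a b (i+2):ℤ) - y * euclidR a b (i+3)| := neg_le_abs _
        · have hy : y < 0 := by
            rcases hy0.lt_or_gt with h | h
            · exact h
            · linarith [mul_pos hx h]
          have h1 : (euclidR a b (i+2):ℤ) ≤ x * euclidR a b (i+2) := by
            have := mul_le_mul_of_nonneg_right (show (1:ℤ) ≤ x by linarith) hr2pos.le
            linarith
          have h2 : 0 ≤ -(y * (euclidR a b (i+3):ℤ)) := by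
            have := mul_nonneg (neg_nonneg.2 hy.le) hr3
            linarith [this]
          calc (euclidR a b (i+2):ℤ)
              ≤ x * euclidR a b (i+2) - y * euclidR a b (i+3) := by linarith
            _ ≤ |x * (euclidR a b (i+2):ℤ) - y * euclidR a b (i+3)| := le_abs_self _
      have hUpos : 0 < convU a b (i+2) := by
        have : (0:ℤ) < (convU a b (i+2):ℤ) := by linarith
        exact_mod_cast this
      have hlt := hbest (convU a b (i+2)) (convV a b (i+2)) hUpos (by exact_mod_cast hpu)
        (fun h => hcon i (le_of_lt hiln) h.symm)
      have habs2 : |(a:ℤ) * convU a b (i+2) - (b:ℤ) * convV a b (i+2)|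
          = (euclidR a b (i+2) : ℤ) := by
        rw [hD2, abs_mul, hεabs, one_mul, abs_of_nonneg hr2pos.le]
      rw [habs2] at hlt
      linarith

/-- (Proposition 2.1, direction 1) ⇒ 2)).
If `0 < b < a` and `(u, v)` with `u > 0` is a best approximation of the second kind, i.e.
`|a·u − b·v| < |a·u' − b·v'|` for all `u', v'` with `0 < u' ≤ u` and `v'/u' ≠ v/u`
(as rationals), then `v/u = v_i/u_i` for some `0 ≤ i ≤ n`. No exception concerning
`a/b = a_0 + 1/2` is needed for this direction. -/
theorem best_approximation_is_convergent
    (a b : ℕ) (hb : 0 < b) (hba : b < a)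
    (n : ℕ) (hn : euclidR a b (n + 2) = 0) (hn' : 0 < euclidR a b (n + 1))
    (u v : ℕ) (hu : 0 < u)
    (hbest : ∀ u' v' : ℕ, 0 < u' → u' ≤ u →
      (v' : ℚ) / (u' : ℚ) ≠ (v : ℚ) / (u : ℚ) →
      |(a : ℤ) * u - (b : ℤ) * v| < |(a : ℤ) * u' - (b : ℤ) * v'|) :
    ∃ i ≤ n, (v : ℚ) / (u : ℚ) = (convV a b (i + 2) : ℚ) / (convU a b (i + 2) : ℚ) := by
  classical
  have hex : ∃ m, euclidR a b (m + 2) = 0 := ⟨n, hn⟩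
  have hm : euclidR a b (Nat.find hex + 2) = 0 := Nat.find_spec hex
  have hmn : Nat.find hex ≤ n := Nat.find_min' hex hn
  have hmin : ∀ k < Nat.find hex, euclidR a b (k + 2) ≠ 0 := fun k hk => Nat.find_min hex hk
  obtain ⟨i, hi, hiq⟩ := main_lemma a b hb hba (Nat.find hex) hm hmin u v hu hbest
  exact ⟨i, hi.trans hmn, hiq⟩
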